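/- The unit sphere in a real inner product space of dimension at least 3 is simply connected. -/

import Mathlib

open Metric Set unitInterval Finset

noncomputable section

namespace Stmt13Aux

variable {E : Type*} [NormedAddCommGroup E] [InnerProductSpace ℝ E]

lemma combo_ne_zero' {u v : E} (hu : ‖u‖ = 1) (hv : ‖v‖ = 1) (huv : u + v ≠ 0)
    {s : ℝ} (hs0 : 0 ≤ s) (hs1 : s ≤ 1) : (1 - s) • u + s • v ≠ 0 := by
  intro hzero
  have h1 : (1 - s) • u = -(s • v) := eq_neg_of_add_eq_zero_left hzero
  have h2 : ‖(1 - s) • u‖ = ‖s • v‖ := by rw [h1, norm_neg]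
  rw [norm_smul, norm_smul, hu, hv, mul_one, mul_one, Real.norm_eq_abs, Real.norm_eq_abs,
    abs_of_nonneg (by linarith), abs_of_nonneg hs0] at h2
  have hs : s = 1 / 2 := by linarith
  apply huv
  have h3 : (1 / 2 : ℝ) • (u + v) = 0 := by
    rw [smul_add]
    rw [hs] at hzero
    convert hzero using 2
    norm_num
  exact (smul_eq_zero.mp h3).resolve_left (by norm_num)

/-- normalization of a nonzero vector, as a point of the unit sphere -/
def nzs (w : E) (hw : w ≠ 0) : Metric.sphere (0 : E) 1 :=
  ⟨‖w‖⁻¹ • w, by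
    simp only [mem_sphere_iff_norm, sub_zero, norm_smul, norm_inv, norm_norm]
    exact inv_mul_cancel₀ (norm_ne_zero_iff.2 hw)⟩

lemma nzs_coe (w : E) (hw : w ≠ 0) : (nzs w hw : E) = ‖w‖⁻¹ • w := rfl

lemma homotopic_of_add_ne_zero {x y : Metric.sphere (0 : E) 1} (p q : Path x y)
    (h : ∀ t, (p t : E) + (q t : E) ≠ 0) : p.Homotopic q := by
  have hg : ∀ st : I × I, (1 - (st.1 : ℝ)) • (p st.2 : E) + (st.1 : ℝ) • (q st.2 : E) ≠ 0 :=
    fun st => combo_ne_zero' (norm_eq_of_mem_sphere (p st.2)) (norm_eq_of_mem_sphere (q st.2))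
      (h st.2) st.1.2.1 st.1.2.2
  have c1 : Continuous fun st : I × I =>
      (1 - (st.1 : ℝ)) • (p st.2 : E) + (st.1 : ℝ) • (q st.2 : E) := by
    have cs : Continuous fun st : I × I => (st.1 : ℝ) :=
      continuous_subtype_val.comp continuous_fst
    have cp : Continuous fun st : I × I => (p st.2 : E) :=
      continuous_subtype_val.comp (p.continuous.comp continuous_snd)
    have cq : Continuous fun st : I × I => (q st.2 : E) :=
      continuous_subtype_val.comp (q.continuous.comp continuous_snd)
    exact ((continuous_const.sub cs).smul cp).add (cs.smul cq)
  refine ⟨⟨⟨⟨fun st => nzs _ (hg st), ?_⟩, ?_, ?_⟩, ?_⟩⟩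
  · exact ((c1.norm.inv₀ fun st => norm_ne_zero_iff.2 (hg st)).smul c1).subtype_mk _
  · intro t
    apply Subtype.ext
    show ‖_‖⁻¹ • _ = (p t : E)
    simp [norm_eq_of_mem_sphere (p t)]
  · intro t
    apply Subtype.ext
    show ‖_‖⁻¹ • _ = (q t : E)
    simp [norm_eq_of_mem_sphere (q t)]
  · intro t u hu
    rcases hu with hu | hu
    · subst hu
      apply Subtype.ext
      show ‖_‖⁻¹ • ((1 - (t : ℝ)) • (p 0 : E) + (t : ℝ) • (q 0 : E)) = (p 0 : E)
      rw [p.source, q.source]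
      have : (1 - (t : ℝ)) • (x : E) + (t : ℝ) • (x : E) = (x : E) := by module
      rw [this]
      simp [norm_eq_of_mem_sphere x, p.source]
    · simp only [Set.mem_singleton_iff] at hu
      subst hu
      apply Subtype.ext
      show ‖_‖⁻¹ • ((1 - (t : ℝ)) • (p 1 : E) + (t : ℝ) • (q 1 : E)) = (p 1 : E)
      rw [p.target, q.target]
      have : (1 - (t : ℝ)) • (y : E) + (t : ℝ) • (y : E) = (y : E) := by module
      rw [this]
      simp [norm_eq_of_mem_sphere y, p.target]


/-- piecewise linear interpolation of the points `c 0, ..., c N` at speed `N` -/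
def plin (c : ℕ → E) (N : ℕ) (t : ℝ) : E :=
  c 0 + ∑ i ∈ Finset.range N, (max 0 (min 1 (N * t - i))) • (c (i + 1) - c i)

lemma plin_continuous (c : ℕ → E) (N : ℕ) : Continuous (plin c N) := by
  unfold plin
  refine continuous_const.add (continuous_finset_sum _ fun i _ => ?_)
  exact (continuous_const.max ((continuous_const.min ((continuous_const.mul
    continuous_id).sub continuous_const)))).smul continuous_const

lemma plin_eq {c : ℕ → E} {N j : ℕ} (hj : j < N) {t : ℝ}
    (h1 : (j : ℝ) / N ≤ t) (h2 : t ≤ ((j : ℝ) + 1) / N) :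
    plin c N t = (1 - (N * t - j)) • c j + (N * t - j) • c (j + 1) := by
  have hN : (0 : ℝ) < N := by exact_mod_cast Nat.pos_of_ne_zero (by omega)
  have hb1 : (j : ℝ) ≤ N * t := by
    rw [div_le_iff₀ hN] at h1; linarith [h1]
  have hb2 : N * t ≤ (j : ℝ) + 1 := by
    rw [le_div_iff₀ hN] at h2; linarith [h2]
  have hsplit : Finset.range N = Finset.range j ∪ {j} ∪ Finset.Ico (j + 1) N := by
    rw [Finset.range_eq_Ico]
    ext i
    simp only [Finset.mem_union, Finset.mem_Ico, Finset.mem_singleton, Finset.mem_range,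
      Finset.range_eq_Ico]
    omega
  rw [plin, hsplit]
  rw [Finset.sum_union (by
    intro a ha hb
    intro x hx; exfalso
    have := ha hx; have := hb hx
    simp at *; omega)]
  rw [Finset.sum_union (by
    intro a ha hb
    intro x hx; exfalso
    have := ha hx; have := hb hx
    simp at *; omega)]
  have e1 : ∑ i ∈ Finset.range j, (max 0 (min 1 ((N : ℝ) * t - i))) • (c (i + 1) - c i)
      = ∑ i ∈ Finset.range j, (c (i + 1) - c i) := by
    apply Finset.sum_congr rfl
    intro i hi
    simp only [Finset.mem_range] at hi
    have : (1 : ℝ) ≤ (N : ℝ) * t - i := by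
      have : (i : ℝ) + 1 ≤ j := by exact_mod_cast Nat.succ_le_of_lt hi
      linarith
    rw [min_eq_left this, max_eq_right zero_le_one, one_smul]
  have e2 : ∑ i ∈ Finset.Ico (j + 1) N, (max 0 (min 1 ((N : ℝ) * t - i))) • (c (i + 1) - c i)
      = 0 := by
    apply Finset.sum_eq_zero
    intro i hi
    simp only [Finset.mem_Ico] at hi
    have hle : (N : ℝ) * t - i ≤ 0 := by
      have : (j : ℝ) + 1 ≤ i := by exact_mod_cast hi.1
      linarith
    rw [min_eq_right (by linarith), max_eq_left (by linarith), zero_smul]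
  rw [e1, e2, Finset.sum_singleton, Finset.sum_range_sub (f := c)]
  rw [min_eq_right (by linarith), max_eq_right (by linarith)]
  module


lemma homotopic_of_ne {x y z : Metric.sphere (0 : E) 1} (p q : Path x y)
    (hp : ∀ t, p t ≠ z) (hq : ∀ t, q t ≠ z) : p.Homotopic q := by
  have hz : ‖(z : E)‖ = 1 := norm_eq_of_mem_sphere z
  set U : Set (Metric.sphere (0 : E) 1) := {z}ᶜ with hU
  have hsrc : (stereographic hz).source = U := by
    rw [stereographic_source]
  have e : U ≃ₜ ((ℝ ∙ (z : E))ᗮ : Submodule ℝ E) :=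
    (Homeomorph.setCongr hsrc.symm).trans
      ((stereographic hz).toHomeomorphSourceTarget.trans
        ((Homeomorph.setCongr (stereographic_target hz)).trans (Homeomorph.Set.univ _)))
  have : ContractibleSpace U := e.contractibleSpace
  have hsc : SimplyConnectedSpace U := inferInstance
  have hx : x ∈ U := by rw [← p.source]; exact hp 0
  have hy : y ∈ U := by rw [← p.target]; exact hp 1
  let p' : Path (⟨x, hx⟩ : U) ⟨y, hy⟩ :=
    { toFun := fun t => ⟨p t, hp t⟩
      continuous_toFun := p.continuous.subtype_mk _
      source' := Subtype.ext p.source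
      target' := Subtype.ext p.target }
  let q' : Path (⟨x, hx⟩ : U) ⟨y, hy⟩ :=
    { toFun := fun t => ⟨q t, hq t⟩
      continuous_toFun := q.continuous.subtype_mk _
      source' := Subtype.ext q.source
      target' := Subtype.ext q.target }
  have h' : p'.Homotopic q' := SimplyConnectedSpace.paths_homotopic p' q'
  have h'' := h'.map (f := ⟨(Subtype.val : U → Metric.sphere (0 : E) 1), continuous_subtype_val⟩)
  have ep : p = p'.map continuous_subtype_val := by ext t; rfl
  have eq : q = q'.map continuous_subtype_val := by ext t; rfl
  rw [ep, eq]
  exact h''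


lemma exists_approx {x y : Metric.sphere (0 : E) 1} (p : Path x y) :
    ∃ (q : Path x y) (s : Finset (Submodule ℝ E)),
      (∀ t, (p t : E) + (q t : E) ≠ 0) ∧ (∀ V ∈ s, Module.rank ℝ V ≤ 2) ∧
      (∀ t, ∃ V ∈ s, (q t : E) ∈ V) := by
  classical
  -- uniform continuity
  have hcont : Continuous fun t : I => (p t : E) := continuous_subtype_val.comp p.continuous
  have huc : UniformContinuous fun t : I => (p t : E) :=
    CompactSpace.uniformContinuous_of_continuous hcont
  rw [Metric.uniformContinuous_iff] at huc
  obtain ⟨δ, hδ0, hδ⟩ := huc (1 / 4) (by norm_num)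
  obtain ⟨n, hn⟩ := exists_nat_one_div_lt hδ0
  set N : ℕ := n + 1 with hNdef
  have hN0 : 0 < N := Nat.succ_pos n
  have hNR : (0 : ℝ) < N := by exact_mod_cast hN0
  have hNδ : 1 / (N : ℝ) < δ := by exact_mod_cast hn
  -- sample points
  set c : ℕ → E := fun i => (p (projIcc 0 1 zero_le_one ((i : ℝ) / N)) : E) with hc
  -- closeness of samples to nearby path points
  have hclose : ∀ (t : I) (j : ℕ), j ≤ N → |(j : ℝ) / N - (t : ℝ)| ≤ 1 / N →
      ‖c j - (p t : E)‖ < 1 / 4 := by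
    intro t j hjN hjt
    have hmem : (j : ℝ) / N ∈ Set.Icc (0 : ℝ) 1 := by
      constructor
      · positivity
      · rw [div_le_one hNR]; exact_mod_cast hjN
    have hdist : dist (projIcc 0 1 zero_le_one ((j : ℝ) / N)) t < δ := by
      rw [Subtype.dist_eq, projIcc_of_mem zero_le_one hmem]
      calc dist ((j : ℝ) / N) (t : ℝ) = |(j : ℝ) / N - (t : ℝ)| := by rw [Real.dist_eq]
        _ ≤ 1 / N := hjt
        _ < δ := hNδ
    have := hδ hdist
    rwa [dist_eq_norm] at this
  -- choice of index
  have hidx : ∀ t : I, ∃ j < N, (j : ℝ) / N ≤ (t : ℝ) ∧ (t : ℝ) ≤ ((j : ℝ) + 1) / N := by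
    intro t
    by_cases h1 : (t : ℝ) = 1
    · refine ⟨N - 1, by omega, ?_, ?_⟩
      · rw [h1, div_le_one hNR]
        have : ((N - 1 : ℕ) : ℝ) ≤ (N : ℝ) := by exact_mod_cast Nat.sub_le N 1
        linarith
      · rw [h1, le_div_iff₀ hNR]
        have : ((N - 1 : ℕ) : ℝ) = (N : ℝ) - 1 := by
          have : (1 : ℕ) ≤ N := hN0
          push_cast [Nat.cast_sub this]
          ring
        rw [this]; ring_nf; linarith
    · have ht0 : (0 : ℝ) ≤ (t : ℝ) := t.2.1
      have ht1 : (t : ℝ) < 1 := lt_of_le_of_ne t.2.2 h1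
      set m : ℕ := Nat.floor ((N : ℝ) * t) with hm
      have hfl : (m : ℝ) ≤ (N : ℝ) * t := Nat.floor_le (by positivity)
      have hfu : (N : ℝ) * t < (m : ℝ) + 1 := Nat.lt_floor_add_one _
      have hmN : m < N := by
        have : (m : ℝ) < (N : ℝ) := lt_of_le_of_lt hfl (by nlinarith)
        exact_mod_cast this
      refine ⟨m, hmN, ?_, ?_⟩
      · rw [div_le_iff₀ hNR]; linarith
      · rw [le_div_iff₀ hNR]; linarith
  -- nonvanishing and estimate
  have key : ∀ t : I, ‖plin c N (t : ℝ) - (p t : E)‖ ≤ 1 / 4 ∧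
      ∃ j < N, plin c N (t : ℝ) ∈ Submodule.span ℝ {c j, c (j + 1)} := by
    intro t
    obtain ⟨j, hjN, hj1, hj2⟩ := hidx t
    have hfeq := plin_eq (c := c) hjN hj1 hj2
    set s : ℝ := (N : ℝ) * t - j with hs
    have hs0 : 0 ≤ s := by
      rw [div_le_iff₀ hNR] at hj1
      simp only [hs]; linarith
    have hs1 : s ≤ 1 := by
      rw [le_div_iff₀ hNR] at hj2
      simp only [hs]; linarith
    have hj1' : (j : ℝ) ≤ (t : ℝ) * N := by rw [div_le_iff₀ hNR] at hj1; exact hj1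
    have hj2' : (t : ℝ) * N ≤ (j : ℝ) + 1 := by rw [le_div_iff₀ hNR] at hj2; exact hj2
    have hcj : ‖c j - (p t : E)‖ < 1 / 4 := by
      apply hclose t j (le_of_lt hjN)
      have e : (j : ℝ) / N - (t : ℝ) = ((j : ℝ) - (t : ℝ) * N) / N := by field_simp
      have habs : |(j : ℝ) - (t : ℝ) * N| ≤ 1 := by rw [abs_le]; constructor <;> linarith
      rw [e, abs_div, abs_of_nonneg (le_of_lt hNR)]
      gcongr
    have hcj1 : ‖c (j + 1) - (p t : E)‖ < 1 / 4 := by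
      apply hclose t (j + 1) (by omega)
      have e : ((j + 1 : ℕ) : ℝ) / N - (t : ℝ) = (((j : ℝ) + 1) - (t : ℝ) * N) / N := by
        push_cast; field_simp
      have habs : |((j : ℝ) + 1) - (t : ℝ) * N| ≤ 1 := by rw [abs_le]; constructor <;> linarith
      rw [e, abs_div, abs_of_nonneg (le_of_lt hNR)]
      gcongr
    have hn1 : (0:ℝ) ≤ ‖c j - (p t : E)‖ := norm_nonneg _
    have hn2 : (0:ℝ) ≤ ‖c (j + 1) - (p t : E)‖ := norm_nonneg _
    have h4 : (1 - s) * ‖c j - (p t : E)‖ + s * ‖c (j + 1) - (p t : E)‖ ≤ 1 / 4 := by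
      nlinarith [hcj.le, hcj1.le]
    constructor
    · rw [hfeq]
      have heq2 : (1 - s) • c j + s • c (j + 1) - (p t : E)
          = (1 - s) • (c j - (p t : E)) + s • (c (j + 1) - (p t : E)) := by module
      rw [heq2]
      refine le_trans (norm_add_le _ _) ?_
      rw [norm_smul, norm_smul, Real.norm_eq_abs, Real.norm_eq_abs,
        abs_of_nonneg (by linarith : (0:ℝ) ≤ 1 - s), abs_of_nonneg hs0]
      exact h4
    · refine ⟨j, hjN, ?_⟩
      rw [hfeq]
      exact Submodule.add_mem _
        (Submodule.smul_mem _ _ (Submodule.subset_span (Set.mem_insert _ _)))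
        (Submodule.smul_mem _ _ (Submodule.subset_span (Set.mem_insert_of_mem _ rfl)))
  have hne : ∀ t : I, plin c N (t : ℝ) ≠ 0 := by
    intro t h0
    have := (key t).1
    rw [h0] at this
    have hpn : ‖(p t : E)‖ = 1 := norm_eq_of_mem_sphere (p t)
    rw [zero_sub, norm_neg, hpn] at this
    norm_num at this
  -- the approximating path
  have hq0 : plin c N ((0 : I) : ℝ) = c 0 := by
    have := plin_eq (c := c) hN0 (t := (0 : ℝ)) (by simp) (by positivity)
    simpa using this
  have hq1 : plin c N ((1 : I) : ℝ) = c N := by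
    have hNN : ((N - 1 : ℕ) : ℝ) = (N : ℝ) - 1 := by
      have h1N : (1 : ℕ) ≤ N := hN0
      push_cast [Nat.cast_sub h1N]; ring
    have hjlt : N - 1 < N := Nat.sub_lt hN0 one_pos
    have e1 : ((N - 1 : ℕ) : ℝ) / N ≤ (1 : ℝ) := by
      rw [div_le_one hNR, hNN]; linarith
    have e2 : (1 : ℝ) ≤ (((N - 1 : ℕ) : ℝ) + 1) / N := by
      rw [le_div_iff₀ hNR, hNN]; linarith
    have heq := plin_eq (c := c) (j := N - 1) hjlt (t := (1 : ℝ)) e1 e2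
    show plin c N (1 : ℝ) = c N
    rw [heq, hNN]
    have hN1 : N - 1 + 1 = N := by omega
    rw [hN1]
    have : (N : ℝ) * 1 - ((N : ℝ) - 1) = 1 := by ring
    rw [this]
    simp
  have hc0 : c 0 = (x : E) := by
    simp only [hc, Nat.cast_zero, zero_div]
    rw [show projIcc (0:ℝ) 1 zero_le_one 0 = (0 : I) from projIcc_of_mem zero_le_one (by norm_num),
      p.source]
  have hcN : c N = (y : E) := by
    simp only [hc]
    rw [show projIcc (0:ℝ) 1 zero_le_one ((N : ℝ)/N) = (1 : I) from by
      rw [div_self (ne_of_gt hNR)]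
      exact projIcc_of_mem zero_le_one (by norm_num), p.target]
  refine ⟨⟨⟨fun t => nzs (plin c N (t : ℝ)) (hne t), ?_⟩, ?_, ?_⟩,
    (Finset.range N).image (fun j => Submodule.span ℝ {c j, c (j + 1)}), ?_, ?_, ?_⟩
  · exact ((((plin_continuous c N).comp continuous_subtype_val).norm.inv₀
      (fun t => norm_ne_zero_iff.2 (hne t))).smul
      ((plin_continuous c N).comp continuous_subtype_val)).subtype_mk _
  · apply Subtype.ext
    show ‖plin c N ((0:I) : ℝ)‖⁻¹ • plin c N ((0:I) : ℝ) = (x : E)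
    rw [hq0, hc0]
    simp [norm_eq_of_mem_sphere x]
  · apply Subtype.ext
    show ‖plin c N ((1:I) : ℝ)‖⁻¹ • plin c N ((1:I) : ℝ) = (y : E)
    rw [hq1, hcN]
    simp [norm_eq_of_mem_sphere y]
  · -- p t + q t ≠ 0
    intro t hsum
    set w := plin c N (t : ℝ) with hw
    have hkey := (key t).1
    have hpn : ‖(p t : E)‖ = 1 := norm_eq_of_mem_sphere (p t)
    have hwn : |1 - ‖w‖| ≤ 1 / 4 := by
      have := abs_norm_sub_norm_le ((p t : E)) w
      rw [hpn] at this
      calc |1 - ‖w‖| ≤ ‖(p t : E) - w‖ := this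
        _ = ‖w - (p t : E)‖ := by rw [norm_sub_rev]
        _ ≤ 1 / 4 := hkey
    have hwpos : (0 : ℝ) < ‖w‖ := norm_pos_iff.2 (hne t)
    -- norm of q t - w
    have hqw : ‖‖w‖⁻¹ • w - w‖ ≤ 1 / 4 := by
      have : ‖w‖⁻¹ • w - w = (‖w‖⁻¹ - 1) • w := by rw [sub_smul, one_smul]
      rw [this, norm_smul, Real.norm_eq_abs]
      have : |‖w‖⁻¹ - 1| * ‖w‖ = |(‖w‖⁻¹ - 1) * ‖w‖| := by
        rw [abs_mul, abs_of_nonneg (norm_nonneg w)]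
      rw [this, sub_mul, inv_mul_cancel₀ (ne_of_gt hwpos), one_mul, abs_sub_comm]
      calc |‖w‖ - 1| = |1 - ‖w‖| := by rw [abs_sub_comm]
        _ ≤ 1 / 4 := hwn
    -- q t = -(p t)
    have hsum' : (p t : E) + ‖w‖⁻¹ • w = 0 := hsum
    have hqeq : (‖w‖⁻¹ • w : E) = -(p t : E) := eq_neg_of_add_eq_zero_right hsum'
    have : ‖(‖w‖⁻¹ • w : E) - (p t : E)‖ = 2 := by
      rw [hqeq]
      have : -(p t : E) - (p t : E) = -((2 : ℝ) • (p t : E)) := by module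
      rw [this, norm_neg, norm_smul, hpn, Real.norm_eq_abs]
      norm_num
    have hle : ‖(‖w‖⁻¹ • w : E) - (p t : E)‖ ≤ 1 / 2 := by
      calc ‖(‖w‖⁻¹ • w : E) - (p t : E)‖
          ≤ ‖(‖w‖⁻¹ • w : E) - w‖ + ‖w - (p t : E)‖ := norm_sub_le_norm_sub_add_norm_sub _ _ _
        _ ≤ 1 / 4 + 1 / 4 := add_le_add hqw hkey
        _ = 1 / 2 := by norm_num
    rw [this] at hle
    norm_num at hle
  · -- rank bound
    intro V hV
    simp only [Finset.mem_image, Finset.mem_range] at hV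
    obtain ⟨j, _, rfl⟩ := hV
    refine le_trans (rank_span_le _) ?_
    refine le_trans Cardinal.mk_insert_le ?_
    rw [Cardinal.mk_singleton]
    norm_num
  · -- membership
    intro t
    obtain ⟨j, hjN, hmem⟩ := (key t).2
    refine ⟨Submodule.span ℝ {c j, c (j + 1)},
      Finset.mem_image_of_mem _ (Finset.mem_range.2 hjN), ?_⟩
    show (‖plin c N (t : ℝ)‖⁻¹ • plin c N (t : ℝ) : E) ∈ _
    exact Submodule.smul_mem _ _ hmem

end Stmt13Aux

open Stmt13Aux in
theorem stmt13 {E : Type*} [NormedAddCommGroup E] [InnerProductSpace ℝ E]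
    (h : 3 ≤ Module.rank ℝ E) :
    SimplyConnectedSpace (Metric.sphere (0 : E) 1) := by
  classical
  have h1 : (1 : Cardinal) < Module.rank ℝ E :=
    lt_of_lt_of_le (by exact_mod_cast (by norm_num : (1:ℕ) < 3)) h
  rw [simply_connected_iff_paths_homotopic']
  refine ⟨?_, ?_⟩
  · rw [← isPathConnected_iff_pathConnectedSpace]
    exact isPathConnected_sphere h1 0 zero_le_one
  · intro x y p₁ p₂
    obtain ⟨q₁, s₁, hh₁, hr₁, hm₁⟩ := exists_approx p₁
    obtain ⟨q₂, s₂, hh₂, hr₂, hm₂⟩ := exists_approx p₂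
    set s : Finset (Submodule ℝ E) := s₁ ∪ s₂ with hs
    have htop : (⊤ : Submodule ℝ E) ∉ s := by
      intro hts
      have h2 : Module.rank ℝ (⊤ : Submodule ℝ E) ≤ 2 := by
        rcases Finset.mem_union.mp hts with h' | h'
        exacts [hr₁ _ h', hr₂ _ h']
      rw [rank_top] at h2
      have h3 : (3 : Cardinal) ≤ 2 := h.trans h2
      exact absurd h3 (by exact_mod_cast (by norm_num : ¬ (3:ℕ) ≤ 2))
    have hcov := Subspace.biUnion_ne_univ_of_top_notMem (s := s) htop
    have hex : ∃ w : E, w ∉ ⋃ V ∈ s, (V : Set E) := by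
      by_contra h'
      push_neg at h'
      exact hcov (Set.eq_univ_of_forall h')
    obtain ⟨w, hw⟩ := hex
    have hw0 : w ≠ 0 := by
      rintro rfl
      obtain ⟨V, hV, -⟩ := hm₁ 0
      exact hw (Set.mem_biUnion (Finset.mem_coe.2 (Finset.mem_union_left _ hV)) V.zero_mem)
    set z : Metric.sphere (0 : E) 1 := nzs w hw0 with hz
    have hmemz : ∀ (V : Submodule ℝ E), V ∈ s → (z : E) ∈ V → False := by
      intro V hV hzV
      apply hw
      have hwV : w ∈ V := by
        have hsm : ‖w‖ • (z : E) = w := by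
          rw [hz, nzs_coe, smul_smul, mul_inv_cancel₀ (norm_ne_zero_iff.2 hw0), one_smul]
        rw [← hsm]
        exact V.smul_mem _ hzV
      exact Set.mem_biUnion (Finset.mem_coe.2 hV) hwV
    have hq₁ : ∀ t, q₁ t ≠ z := by
      intro t hqt
      obtain ⟨V, hV, hmem⟩ := hm₁ t
      exact hmemz V (Finset.mem_union_left _ hV) (by rw [← hqt]; exact hmem)
    have hq₂ : ∀ t, q₂ t ≠ z := by
      intro t hqt
      obtain ⟨V, hV, hmem⟩ := hm₂ t
      exact hmemz V (Finset.mem_union_right _ hV) (by rw [← hqt]; exact hmem)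
    have h₁ : p₁.Homotopic q₁ := homotopic_of_add_ne_zero p₁ q₁ hh₁
    have h₂ : p₂.Homotopic q₂ := homotopic_of_add_ne_zero p₂ q₂ hh₂
    exact h₁.trans ((homotopic_of_ne q₁ q₂ hq₁ hq₂).trans h₂.symm)
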